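/- Let Σ = X(S¹) be an embedded, closed, smooth plane curve and suppose the function (p,q) ↦ d(p,q)/ψ(p,q) attains a local minimum at a pair (p,q) with p ≠ q and l(p,q) ≤ L/2. Then the second-derivative conditions yield ⟨w, κ⃗_q − κ⃗_p⟩ ≥ −4π² d(p,q)/L², which, by the definition of ψ, equals −(4π d/(ψ L)) · sin(π l/L) at (p,q). -/

import Mathlib

open Real Set MeasureTheory

noncomputable section

/-- The Euclidean plane. -/
abbrev E2 : Type := EuclideanSpace ℝ (Fin 2)

/-- Rotation by minus 90 degrees: `(a, b) ↦ (b, -a)`. -/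
def rot90 (u : E2) : E2 := WithLp.toLp 2 ![u 1, -u 0]

/-- Length element `v(p) = ‖∂X/∂p‖`. -/
def lenElem (X : ℝ → E2) (p : ℝ) : ℝ := ‖deriv X p‖

/-- Unit tangent vector `τ = v⁻¹ ∂X/∂p`. -/
def tvec (X : ℝ → E2) (p : ℝ) : E2 := (lenElem X p)⁻¹ • deriv X p

/-- Outward unit normal `ν = (τ₂, -τ₁)`. -/
def nvec (X : ℝ → E2) (p : ℝ) : E2 := rot90 (tvec X p)

/-- Curvature `κ = -⟨∂τ/∂s, ν⟩`, where `∂/∂s = v⁻¹ ∂/∂p` is the arc-length derivative. -/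
def curv (X : ℝ → E2) (p : ℝ) : ℝ :=
  -(inner ℝ ((lenElem X p)⁻¹ • deriv (tvec X) p) (nvec X p) : ℝ)

/-- Curvature vector `κ⃗ = -κ ν`. -/
def kvec (X : ℝ → E2) (p : ℝ) : E2 := (-(curv X p)) • nvec X p

/-- Local total curvature `θ(p,q) = ∫_p^q κ ds`. -/
def theta (X : ℝ → E2) (p q : ℝ) : ℝ := ∫ r in p..q, curv X r * lenElem X r

/-- Intrinsic (arc-length) distance `l(p,q) = ∫_p^q ds`. -/
def arcl (X : ℝ → E2) (p q : ℝ) : ℝ := ∫ r in p..q, lenElem X r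

/-- `∫_p^q κ² ds`. -/
def sqCurvInt (X : ℝ → E2) (p q : ℝ) : ℝ := ∫ r in p..q, (curv X r)^2 * lenElem X r

/-- Total length `L` of the (1-periodic) curve. -/
def clen (X : ℝ → E2) : ℝ := arcl X 0 1

/-- Extrinsic distance `d(p,q) = ‖X(q) - X(p)‖`. -/
def extd (X : ℝ → E2) (p q : ℝ) : ℝ := ‖X q - X p‖

/-- The unit vector `w = (X(q) - X(p))/d(p,q)`. -/
def wvec (X : ℝ → E2) (p q : ℝ) : E2 := (extd X p q)⁻¹ • (X q - X p)

/-- `ψ(p,q) = (L/π) sin(π l(p,q)/L)`. -/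
def psi (X : ℝ → E2) (p q : ℝ) : ℝ :=
  (clen X / π) * Real.sin (π * arcl X p q / clen X)

/-- A closed smooth regular curve, modelled as a 1-periodic map `ℝ → ℝ²`. -/
def IsClosedCurve (X : ℝ → E2) : Prop :=
  ContDiff ℝ (⊤ : ℕ∞) X ∧ Function.Periodic X 1 ∧ ∀ p, deriv X p ≠ 0

/-- Embeddedness: self-intersections only at parameters differing by a full period. -/
def IsEmbedded (X : ℝ → E2) : Prop :=
  ∀ p q : ℝ, X p = X q → ∃ k : ℤ, q - p = (k : ℝ)

/-- The set of values of the local total curvature over all pairs of points on the curve. -/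
def thetaVals (X : ℝ → E2) : Set ℝ :=
  {x : ℝ | ∃ p q : ℝ, p ≤ q ∧ q ≤ p + 1 ∧ x = theta X p q}

/-- The time-`t` curve of a flow. -/
def curveAt (X : ℝ → ℝ → E2) (t : ℝ) : ℝ → E2 := fun p => X p t

/-- Joint smoothness of a flow of curves. -/
def SmoothFlow (X : ℝ → ℝ → E2) : Prop :=
  ContDiff ℝ (⊤ : ℕ∞) (fun z : ℝ × ℝ => X z.1 z.2)

/-- The flow equation `∂X/∂t = (h(t) - κ)ν` holding for all times in `S`. -/
def FlowEq (X : ℝ → ℝ → E2) (h : ℝ → ℝ) (S : Set ℝ) : Prop :=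
  ∀ p : ℝ, ∀ t ∈ S,
    HasDerivAt (fun s => X p s)
      ((h t - curv (curveAt X t) p) • nvec (curveAt X t) p) t

set_option linter.unusedSectionVars false
set_option maxHeartbeats 1000000

namespace ABProof
open Filter

/-- At an interior local minimum, the first derivative vanishes and the second is nonneg. -/
lemma localMin_deriv_cond {g g' : ℝ → ℝ} {c : ℝ} (hmin : IsLocalMin g 0)
    (hg : ∀ᶠ x in nhds (0:ℝ), HasDerivAt g (g' x) x)
    (hg' : HasDerivAt g' c 0) : g' 0 = 0 ∧ 0 ≤ c := by
  have h0 : g' 0 = 0 := by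
    have := hmin.deriv_eq_zero
    rwa [hg.self_of_nhds.deriv] at this
  refine ⟨h0, ?_⟩
  by_contra hc
  push_neg at hc
  have hslope := hasDerivAt_iff_tendsto_slope.1 hg'
  have hneg : ∀ᶠ x in nhds (0:ℝ), x ∈ Set.Ioi (0:ℝ) → g' x < 0 := by
    have h2 : ∀ᶠ x in nhdsWithin (0:ℝ) {(0:ℝ)}ᶜ, slope g' 0 x < 0 :=
      hslope.eventually_lt_const hc
    rw [eventually_nhdsWithin_iff] at h2
    filter_upwards [h2] with x hx hx0
    have hx' := hx (ne_of_gt hx0)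
    have hs : slope g' 0 x = g' x / x := by
      simp [slope, h0, vsub_eq_sub, inv_mul_eq_div]
    rw [hs] at hx'
    rcases div_neg_iff.1 hx' with ⟨ha, hb⟩ | ⟨ha, hb⟩
    · exact absurd hb (not_lt.2 (le_of_lt hx0))
    · exact ha
  obtain ⟨ε1, hε1, hneg'⟩ := Metric.eventually_nhds_iff_ball.1 hneg
  obtain ⟨ε2, hε2, hgball⟩ := Metric.eventually_nhds_iff_ball.1 hg
  obtain ⟨ε3, hε3, hminball⟩ := Metric.eventually_nhds_iff_ball.1 hmin
  set ε := min ε1 (min ε2 ε3) / 2 with hεdef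
  have hεpos : 0 < ε := by positivity
  have hεlt1 : ε < ε1 := by
    have h : min ε1 (min ε2 ε3) ≤ ε1 := min_le_left _ _
    have : ε ≤ ε1 / 2 := by rw [hεdef]; linarith
    linarith
  have hεlt2 : ε < ε2 := by
    have h : min ε1 (min ε2 ε3) ≤ ε2 := (min_le_right _ _).trans (min_le_left _ _)
    have : ε ≤ ε2 / 2 := by rw [hεdef]; linarith
    linarith
  have hεlt3 : ε < ε3 := by
    have h : min ε1 (min ε2 ε3) ≤ ε3 := (min_le_right _ _).trans (min_le_right _ _)
    have : ε ≤ ε3 / 2 := by rw [hεdef]; linarith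
    linarith
  have hball : ∀ x : ℝ, 0 ≤ x → x ≤ ε → ∀ {δ : ℝ}, ε < δ → x ∈ Metric.ball (0:ℝ) δ := by
    intro x h1 h2 δ hδ
    simp only [Metric.mem_ball, Real.dist_eq, sub_zero]
    rw [abs_of_nonneg h1]; linarith
  have hanti : StrictAntiOn g (Set.Icc 0 ε) := by
    apply strictAntiOn_of_deriv_neg (convex_Icc 0 ε)
    · intro x hx
      exact (hgball _ (hball x hx.1 hx.2 hεlt2)).differentiableAt.continuousAt.continuousWithinAt
    · intro x hx
      rw [interior_Icc] at hx
      rw [(hgball _ (hball x (le_of_lt hx.1) (le_of_lt hx.2) hεlt2)).deriv]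
      exact hneg' _ (hball x (le_of_lt hx.1) (le_of_lt hx.2) hεlt1) hx.1
  have h1 : g ε < g 0 :=
    hanti (Set.left_mem_Icc.2 (le_of_lt hεpos)) (Set.right_mem_Icc.2 (le_of_lt hεpos)) hεpos
  have h2 : g 0 ≤ g ε := hminball _ (hball ε (le_of_lt hεpos) le_rfl hεlt3)
  linarith

lemma inner_E2 (u v : E2) : (inner ℝ u v : ℝ) = u 0 * v 0 + u 1 * v 1 := by
  simp [PiLp.inner_apply, Fin.sum_univ_two, mul_comm]

lemma norm_sq_E2 (u : E2) : ‖u‖^2 = u 0 ^2 + u 1 ^2 := by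
  rw [← real_inner_self_eq_norm_sq, inner_E2]; ring

lemma decomp_E2 (τ x : E2) (h : ‖τ‖ = 1) :
    x = (inner ℝ x τ : ℝ) • τ + (inner ℝ x (rot90 τ) : ℝ) • rot90 τ := by
  have h1 : τ 0 ^2 + τ 1 ^2 = 1 := by rw [← norm_sq_E2, h]; norm_num
  refine (PiLp.ext ?_).symm
  intro i
  fin_cases i <;>
    simp only [inner_E2, rot90, Matrix.cons_val_zero, Matrix.cons_val_one, Matrix.head_cons,
      PiLp.add_apply, PiLp.smul_apply, smul_eq_mul, Fin.mk_zero, Fin.mk_one]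
  · linear_combination (x 0) * h1
  · linear_combination (x 1) * h1

section curve
variable {X : ℝ → E2} (hX : ContDiff ℝ (⊤:ℕ∞) X) (hX' : ∀ r, deriv X r ≠ 0)
include hX hX'

lemma hv_pos : ∀ r, 0 < lenElem X r := fun r => norm_pos_iff.2 (hX' r)

lemma hXd1 : Differentiable ℝ X := (contDiff_infty_iff_deriv.1 hX).1
lemma hXderivCD : ContDiff ℝ (⊤:ℕ∞) (deriv X) := (contDiff_infty_iff_deriv.1 hX).2
lemma hX'd : Differentiable ℝ (deriv X) :=
  (contDiff_infty_iff_deriv.1 (hXderivCD hX hX')).1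

lemma hvCD (r : ℝ) : ContDiffAt ℝ (⊤:ℕ∞) (lenElem X) r :=
  ContDiffAt.norm ℝ ((hXderivCD hX hX').contDiffAt) (hX' r)

lemma hv_cont : Continuous (lenElem X) := by
  rw [continuous_iff_continuousAt]
  exact fun r => ((hvCD hX hX' r).differentiableAt (by simp)).continuousAt

lemma hv_diff (r : ℝ) : DifferentiableAt ℝ (lenElem X) r :=
  (hvCD hX hX' r).differentiableAt (by simp)

lemma htau_diff (r : ℝ) : DifferentiableAt ℝ (tvec X) r := by
  show DifferentiableAt ℝ (fun r => (lenElem X r)⁻¹ • deriv X r) r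
  apply DifferentiableAt.fun_smul
  · exact (hv_diff hX hX' r).inv (ne_of_gt (hv_pos hX hX' r))
  · exact hX'd hX hX' r

lemma htau_norm (r : ℝ) : ‖tvec X r‖ = 1 := by
  rw [tvec, norm_smul, norm_inv, Real.norm_eq_abs,
    abs_of_pos (hv_pos hX hX' r)]
  exact inv_mul_cancel₀ (ne_of_gt (hv_pos hX hX' r))

lemma hX'_eq (r : ℝ) : deriv X r = lenElem X r • tvec X r := by
  rw [tvec, smul_smul, mul_inv_cancel₀ (ne_of_gt (hv_pos hX hX' r)), one_smul]

lemma htau'_orth (r : ℝ) : (inner ℝ (deriv (tvec X) r) (tvec X r) : ℝ) = 0 := by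
  have h1 : (fun u => (inner ℝ (tvec X u) (tvec X u) : ℝ)) = fun _ => (1:ℝ) := by
    funext u
    rw [real_inner_self_eq_norm_sq, htau_norm hX hX']
    norm_num
  have h2 : HasDerivAt (fun u => (inner ℝ (tvec X u) (tvec X u) : ℝ))
      ((inner ℝ (tvec X r) (deriv (tvec X) r) : ℝ) + (inner ℝ (deriv (tvec X) r) (tvec X r) : ℝ)) r :=
    HasDerivAt.inner ℝ ((htau_diff hX hX' r).hasDerivAt) ((htau_diff hX hX' r).hasDerivAt)
  rw [h1] at h2
  have h3 := (hasDerivAt_const r (1:ℝ)).unique h2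
  rw [real_inner_comm] at h3
  linarith [h3]

lemma kvec_eq (r : ℝ) : kvec X r = (lenElem X r)⁻¹ • deriv (tvec X) r := by
  have hd := decomp_E2 (tvec X r) ((lenElem X r)⁻¹ • deriv (tvec X) r) (htau_norm hX hX' r)
  have h0 : (inner ℝ ((lenElem X r)⁻¹ • deriv (tvec X) r) (tvec X r) : ℝ) = 0 := by
    rw [real_inner_smul_left, htau'_orth hX hX', mul_zero]
  rw [h0, zero_smul, zero_add] at hd
  rw [kvec, curv, neg_neg, nvec]
  exact hd.symm

lemma hX''_eq (r : ℝ) : deriv (deriv X) r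
    = lenElem X r • deriv (tvec X) r + deriv (lenElem X) r • tvec X r := by
  have h1 : deriv X = fun u => lenElem X u • tvec X u := funext (hX'_eq hX hX')
  have h2 : HasDerivAt (fun u => lenElem X u • tvec X u)
      (lenElem X r • deriv (tvec X) r + deriv (lenElem X) r • tvec X r) r :=
    HasDerivAt.smul ((hv_diff hX hX' r).hasDerivAt) ((htau_diff hX hX' r).hasDerivAt)
  rw [← h1] at h2
  exact h2.deriv

lemma hv_intable (x y : ℝ) : IntervalIntegrable (lenElem X) MeasureTheory.volume x y :=
  (hv_cont hX hX').intervalIntegrable x y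

lemma hF_deriv (x : ℝ) :
    HasDerivAt (fun y => ∫ r in (0:ℝ)..y, lenElem X r) (lenElem X x) x :=
  intervalIntegral.integral_hasDerivAt_right (hv_intable hX hX' 0 x)
    ((hv_cont hX hX').stronglyMeasurableAtFilter _ _) (hv_cont hX hX').continuousAt

lemma arcl_eq_F (x y : ℝ) :
    arcl X x y = (∫ r in (0:ℝ)..y, lenElem X r) - ∫ r in (0:ℝ)..x, lenElem X r := by
  rw [arcl, ← intervalIntegral.integral_interval_sub_left (hv_intable hX hX' 0 y)
    (hv_intable hX hX' 0 x)]

lemma hXdd (r : ℝ) : ((lenElem X r)⁻¹)^2 • deriv (deriv X) r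
    = kvec X r + (((lenElem X r)⁻¹)^2 * deriv (lenElem X) r) • tvec X r := by
  have hvr := ne_of_gt (hv_pos hX hX' r)
  have hco : ((lenElem X r)⁻¹)^2 * lenElem X r = (lenElem X r)⁻¹ := by
    rw [sq]; field_simp
  rw [hX''_eq hX hX' r, smul_add, smul_smul, smul_smul, hco, kvec_eq hX hX' r]

end curve
end ABProof

namespace ABProof
open Filter

section variation
variable {X : ℝ → E2} {p q : ℝ}

lemma variation (hX : ContDiff ℝ (⊤:ℕ∞) X) (hX' : ∀ r, deriv X r ≠ 0) (hd0 : X q - X p ≠ 0) (hψ0 : 0 < psi X p q)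
    (hmin : IsLocalMin (fun z : ℝ × ℝ => extd X z.1 z.2 / psi X z.1 z.2) (p, q))
    (a b : ℝ) :
    (inner ℝ (X q - X p) (b • deriv X q - a • deriv X p) : ℝ) / extd X p q
      = (extd X p q / psi X p q) *
        (Real.cos (π * arcl X p q / clen X) * (b * lenElem X q - a * lenElem X p)) ∧
    0 ≤ ((inner ℝ (b • deriv X q - a • deriv X p) (b • deriv X q - a • deriv X p) : ℝ)
          + (inner ℝ (X q - X p) ((b^2) • deriv (deriv X) q - (a^2) • deriv (deriv X) p) : ℝ))
            / extd X p q
        - ((inner ℝ (X q - X p) (b • deriv X q - a • deriv X p) : ℝ))^2 / (extd X p q)^3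
        - (extd X p q / psi X p q) *
          (Real.cos (π * arcl X p q / clen X)
              * (b^2 * deriv (lenElem X) q - a^2 * deriv (lenElem X) p)
           - Real.sin (π * arcl X p q / clen X) * (π / clen X)
              * (b * lenElem X q - a * lenElem X p)^2) := by
  have hπ : (π : ℝ) ≠ 0 := ne_of_gt Real.pi_pos
  have hL0 : clen X ≠ 0 := by
    intro h
    rw [psi, h] at hψ0
    simp at hψ0
  have hd0' : extd X p q ≠ 0 := by rw [extd]; exact norm_ne_zero_iff.2 hd0
  have hd0pos : 0 < extd X p q := by
    rw [extd]; exact norm_pos_iff.2 hd0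
  set v : ℝ → ℝ := lenElem X with hvdef
  set F : ℝ → ℝ := fun y => ∫ r in (0:ℝ)..y, lenElem X r with hFdef
  set L : ℝ := clen X with hLdef
  set m : ℝ := extd X p q / psi X p q with hmdef
  set P : ℝ → ℝ := fun u => p + a * u with hPdef
  set Q : ℝ → ℝ := fun u => q + b * u with hQdef
  have hP : ∀ u, HasDerivAt P a u := fun u => by
    exact (((hasDerivAt_id' u).const_mul a).const_add p).congr_deriv (mul_one a)
  have hQ : ∀ u, HasDerivAt Q b u := fun u => by
    exact (((hasDerivAt_id' u).const_mul b).const_add q).congr_deriv (mul_one b)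
  have hP0 : P 0 = p := by simp [hPdef]
  have hQ0 : Q 0 = q := by simp [hQdef]
  set e : ℝ → E2 := fun u => X (Q u) - X (P u) with hedef
  set e1 : ℝ → E2 := fun u => b • deriv X (Q u) - a • deriv X (P u) with he1def
  set ℓ : ℝ → ℝ := fun u => F (Q u) - F (P u) with hℓdef
  set ℓ1 : ℝ → ℝ := fun u => b * v (Q u) - a * v (P u) with hℓ1def
  have he : ∀ u, HasDerivAt e (e1 u) u := by
    intro u
    have h1 : HasDerivAt (fun u => X (Q u)) (b • deriv X (Q u)) u := by
      simpa [Function.comp_def] using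
        HasDerivAt.scomp u ((hXd1 hX hX' (Q u)).hasDerivAt) (hQ u)
    have h2 : HasDerivAt (fun u => X (P u)) (a • deriv X (P u)) u := by
      simpa [Function.comp_def] using
        HasDerivAt.scomp u ((hXd1 hX hX' (P u)).hasDerivAt) (hP u)
    exact h1.sub h2
  have hℓ' : ∀ u, HasDerivAt ℓ (ℓ1 u) u := by
    intro u
    have h1 : HasDerivAt (fun u => F (Q u)) (b * v (Q u)) u := by
      have := HasDerivAt.comp u (hF_deriv hX hX' (Q u)) (hQ u)
      simpa [Function.comp_def, mul_comm] using this
    have h2 : HasDerivAt (fun u => F (P u)) (a * v (P u)) u := by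
      have := HasDerivAt.comp u (hF_deriv hX hX' (P u)) (hP u)
      simpa [Function.comp_def, mul_comm] using this
    exact h1.sub h2
  have he0 : e 0 = X q - X p := by rw [hedef]; simp [hP0, hQ0]
  have hℓ0 : ℓ 0 = arcl X p q := by
    rw [hℓdef]; simp only [hP0, hQ0]
    rw [hFdef, ← arcl_eq_F hX hX']
  have hℓ10 : ℓ1 0 = b * v q - a * v p := by rw [hℓ1def]; simp [hP0, hQ0]
  have he10 : e1 0 = b • deriv X q - a • deriv X p := by rw [he1def]; simp [hP0, hQ0]
  have hexd : extd X p q = ‖e 0‖ := by rw [extd, he0]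
  -- e u ≠ 0 near 0
  have hecont : Continuous e := by
    apply Continuous.sub
    · exact (hXd1 hX hX').continuous.comp (by continuity)
    · exact (hXd1 hX hX').continuous.comp (by continuity)
  have hne : ∀ᶠ u in nhds (0:ℝ), e u ≠ 0 := by
    have : ContinuousAt e 0 := hecont.continuousAt
    have h2 : e 0 ≠ 0 := by rw [he0]; exact hd0
    exact this.eventually_ne h2
  -- norm derivative
  have hnorm : ∀ u, e u ≠ 0 → HasDerivAt (fun u => ‖e u‖)
      ((inner ℝ (e u) (e1 u) : ℝ) / ‖e u‖) u := by
    intro u hu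
    have hSd : HasDerivAt (fun u => (inner ℝ (e u) (e u) : ℝ))
        ((inner ℝ (e u) (e1 u) : ℝ) + (inner ℝ (e1 u) (e u) : ℝ)) u :=
      HasDerivAt.inner ℝ (he u) (he u)
    have hS0 : (inner ℝ (e u) (e u) : ℝ) ≠ 0 := by
      rw [real_inner_self_eq_norm_sq]
      exact pow_ne_zero 2 (norm_ne_zero_iff.2 hu)
    have hsq := (Real.hasDerivAt_sqrt hS0).comp u hSd
    have hfun : (fun u => ‖e u‖) = fun u => Real.sqrt ((inner ℝ (e u) (e u) : ℝ)) :=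
      funext fun u => norm_eq_sqrt_real_inner (e u)
    rw [hfun]
    refine hsq.congr_deriv ?_
    symm
    rw [real_inner_comm (e1 u) (e u), ← norm_eq_sqrt_real_inner]
    have hn : ‖e u‖ ≠ 0 := norm_ne_zero_iff.2 hu
    field_simp
    ring
  -- the comparison function and its local minimum
  set g : ℝ → ℝ := fun u => ‖e u‖ - (m * (L / π)) * Real.sin (π * ℓ u / L) with hgdef
  set g1 : ℝ → ℝ := fun u =>
    (inner ℝ (e u) (e1 u) : ℝ) / ‖e u‖ - m * (Real.cos (π * ℓ u / L) * ℓ1 u) with hg1def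
  have hψval : ∀ u, psi X (P u) (Q u) = (L / π) * Real.sin (π * ℓ u / L) := by
    intro u
    rw [psi, hℓdef]
    simp only [hFdef]
    rw [← arcl_eq_F hX hX', ← hLdef]
  have hψ00 : psi X p q = (L / π) * Real.sin (π * ℓ 0 / L) := by
    have := hψval 0
    rwa [hP0, hQ0] at this
  have hgmin : IsLocalMin g 0 := by
    have hcontPQ : ContinuousAt (fun u => (P u, Q u)) 0 := by
      apply ContinuousAt.prodMk <;> fun_prop
    have hPQ0 : (fun u => (P u, Q u)) 0 = (p, q) := by simp [hP0, hQ0]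
    have htend : Tendsto (fun u => (P u, Q u)) (nhds 0) (nhds (p, q)) := by
      have h := hcontPQ.tendsto
      rwa [hP0, hQ0] at h
    have hpull : ∀ᶠ u in nhds (0:ℝ),
        extd X p q / psi X p q ≤ extd X (P u) (Q u) / psi X (P u) (Q u) :=
      htend.eventually hmin
    have hℓcont : Continuous ℓ := by
      have hFc : Continuous F := by
        have : Differentiable ℝ F := fun x => (hF_deriv hX hX' x).differentiableAt
        exact this.continuous
      have hQc : Continuous Q := by rw [hQdef]; fun_prop
      have hPc : Continuous P := by rw [hPdef]; fun_prop
      rw [hℓdef]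
      exact (hFc.comp hQc).sub (hFc.comp hPc)
    have hψpos : ∀ᶠ u in nhds (0:ℝ), 0 < (L / π) * Real.sin (π * ℓ u / L) := by
      have hc : Continuous (fun u => (L / π) * Real.sin (π * ℓ u / L)) :=
        continuous_const.mul (Real.continuous_sin.comp ((continuous_const.mul hℓcont).div_const L))
      have h0 : (0:ℝ) < (L / π) * Real.sin (π * ℓ 0 / L) := by rw [← hψ00]; exact hψ0
      exact hc.continuousAt.tendsto.eventually_const_lt h0
    have hg0 : g 0 = 0 := by
      rw [hgdef]
      simp only
      rw [← hexd, mul_assoc, ← hψ00, hmdef]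
      field_simp
      ring
    rw [IsLocalMin, IsMinFilter, hg0]
    filter_upwards [hpull, hψpos] with u h1 h2
    have hextd : extd X (P u) (Q u) = ‖e u‖ := by rw [extd, hedef]
    rw [hextd, hψval u] at h1
    have h3 : m * ((L / π) * Real.sin (π * ℓ u / L)) ≤ ‖e u‖ := by
      rw [hmdef]
      calc extd X p q / psi X p q * ((L / π) * Real.sin (π * ℓ u / L))
          ≤ ‖e u‖ / ((L / π) * Real.sin (π * ℓ u / L)) * ((L / π) * Real.sin (π * ℓ u / L)) := by
            apply mul_le_mul_of_nonneg_right h1 (le_of_lt h2)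
        _ = ‖e u‖ := div_mul_cancel₀ _ (ne_of_gt h2)
    rw [hgdef]
    simp only
    linarith [h3]
  -- first derivative of g near 0
  have hinner : ∀ u, HasDerivAt (fun u => π * ℓ u / L) (π * ℓ1 u / L) u := fun u =>
    ((hℓ' u).const_mul π).div_const L
  have hg : ∀ᶠ u in nhds (0:ℝ), HasDerivAt g (g1 u) u := by
    filter_upwards [hne] with u hu
    have h1 := hnorm u hu
    have hsin : HasDerivAt (fun u => Real.sin (π * ℓ u / L))
        (Real.cos (π * ℓ u / L) * (π * ℓ1 u / L)) u := by
      simpa [Function.comp_def] using (Real.hasDerivAt_sin (π * ℓ u / L)).comp u (hinner u)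
    have hs2 := hsin.const_mul (m * (L / π))
    have hval : m * (L / π) * (Real.cos (π * ℓ u / L) * (π * ℓ1 u / L))
        = m * (Real.cos (π * ℓ u / L) * ℓ1 u) := by
      field_simp
    rw [hval] at hs2
    exact h1.sub hs2
  -- second derivative data at 0
  have he0ne : e 0 ≠ 0 := by rw [he0]; exact hd0
  have hQsc : HasDerivAt (fun u => deriv X (Q u)) (b • deriv (deriv X) q) 0 := by
    have := HasDerivAt.scomp 0 ((hX'd hX hX' (Q 0)).hasDerivAt) (hQ 0)
    simpa [Function.comp_def, hQ0] using this
  have hPsc : HasDerivAt (fun u => deriv X (P u)) (a • deriv (deriv X) p) 0 := by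
    have := HasDerivAt.scomp 0 ((hX'd hX hX' (P 0)).hasDerivAt) (hP 0)
    simpa [Function.comp_def, hP0] using this
  have he1' : HasDerivAt e1 ((b^2) • deriv (deriv X) q - (a^2) • deriv (deriv X) p) 0 := by
    have h1 := (hQsc.const_smul b).sub (hPsc.const_smul a)
    have hbb : b • b • deriv (deriv X) q = (b^2) • deriv (deriv X) q := by
      rw [smul_smul, sq]
    have haa : a • a • deriv (deriv X) p = (a^2) • deriv (deriv X) p := by
      rw [smul_smul, sq]
    rw [hbb, haa] at h1
    exact h1
  have hN : HasDerivAt (fun u => (inner ℝ (e u) (e1 u) : ℝ))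
      ((inner ℝ (e 0) ((b^2) • deriv (deriv X) q - (a^2) • deriv (deriv X) p) : ℝ)
        + (inner ℝ (e1 0) (e1 0) : ℝ)) 0 :=
    HasDerivAt.inner ℝ (he 0) he1'
  have hden := hnorm 0 he0ne
  have hquot := hN.div hden (norm_ne_zero_iff.2 he0ne)
  have hcos : HasDerivAt (fun u => Real.cos (π * ℓ u / L))
      (-Real.sin (π * ℓ 0 / L) * (π * ℓ1 0 / L)) 0 := by
    simpa [Function.comp_def] using (Real.hasDerivAt_cos (π * ℓ 0 / L)).comp 0 (hinner 0)
  have hvQ : HasDerivAt (fun u => b * v (Q u)) (b * (deriv v q * b)) 0 := by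
    have := HasDerivAt.comp 0 ((hv_diff hX hX' (Q 0)).hasDerivAt) (hQ 0)
    rw [hQ0] at this
    exact (by simpa [Function.comp_def, hQ0] using this : HasDerivAt (fun u => v (Q u)) (deriv v q * b) 0).const_mul b
  have hvP : HasDerivAt (fun u => a * v (P u)) (a * (deriv v p * a)) 0 := by
    have := HasDerivAt.comp 0 ((hv_diff hX hX' (P 0)).hasDerivAt) (hP 0)
    rw [hP0] at this
    exact (by simpa [Function.comp_def, hP0] using this : HasDerivAt (fun u => v (P u)) (deriv v p * a) 0).const_mul a
  have hℓ1' : HasDerivAt ℓ1 (b * (deriv v q * b) - a * (deriv v p * a)) 0 := hvQ.sub hvP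
  have hg1' := hquot.sub ((hcos.mul hℓ1').const_mul m)
  obtain ⟨hfirst, hsecond⟩ := localMin_deriv_cond hgmin hg hg1'
  constructor
  · rw [hg1def] at hfirst
    simp only at hfirst
    rw [he0, he10, hℓ0, hℓ10] at hfirst
    rw [show ‖X q - X p‖ = extd X p q from rfl] at hfirst
    rw [hvdef, hLdef, hmdef] at hfirst
    linarith [hfirst]
  · rw [he0, he10, hℓ0, hℓ10] at hsecond
    rw [show ‖X q - X p‖ = extd X p q from rfl] at hsecond
    rw [hvdef, hLdef, hmdef] at hsecond
    set d : ℝ := extd X p q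
    set Iee : ℝ := (inner ℝ (X q - X p) (b • deriv X q - a • deriv X p) : ℝ)
    set I11 : ℝ := (inner ℝ (b • deriv X q - a • deriv X p) (b • deriv X q - a • deriv X p) : ℝ)
    set Ie2 : ℝ := (inner ℝ (X q - X p) ((b^2) • deriv (deriv X) q - (a^2) • deriv (deriv X) p) : ℝ)
    set co : ℝ := Real.cos (π * arcl X p q / clen X)
    set si : ℝ := Real.sin (π * arcl X p q / clen X)
    have hexp : ((Ie2 + I11) * d - Iee * (Iee / d)) / d ^ 2
          - m * (-si * (π * (b * lenElem X q - a * lenElem X p) / clen X)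
              * (b * lenElem X q - a * lenElem X p)
            + co * (b * (deriv (lenElem X) q * b) - a * (deriv (lenElem X) p * a)))
        = (I11 + Ie2) / d - Iee ^ 2 / d ^ 3
          - m * (co * (b ^ 2 * deriv (lenElem X) q - a ^ 2 * deriv (lenElem X) p)
            - si * (π / clen X) * (b * lenElem X q - a * lenElem X p) ^ 2) := by
      field_simp
      ring
    rw [hexp] at hsecond
    exact hsecond

end variation
end ABProof

namespace ABProof

lemma sq_inner_rot (u t : E2) (hu : ‖u‖ = 1) (ht : ‖t‖ = 1) :
    (inner ℝ u t : ℝ)^2 + (inner ℝ t (rot90 u) : ℝ)^2 = 1 := by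
  have h1 : u 0 ^2 + u 1 ^2 = 1 := by rw [← norm_sq_E2, hu]; norm_num
  have h2 : t 0 ^2 + t 1 ^2 = 1 := by rw [← norm_sq_E2, ht]; norm_num
  simp only [inner_E2, rot90, Matrix.cons_val_zero, Matrix.cons_val_one, Matrix.head_cons]
  nlinarith [h1, h2]

lemma inner_mul_decomp (u t1 t2 : E2) (hu : ‖u‖ = 1) :
    (inner ℝ t1 t2 : ℝ) = (inner ℝ u t1 : ℝ) * (inner ℝ u t2 : ℝ)
      + (inner ℝ t1 (rot90 u) : ℝ) * (inner ℝ t2 (rot90 u) : ℝ) := by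
  have h1 : u 0 ^2 + u 1 ^2 = 1 := by rw [← norm_sq_E2, hu]; norm_num
  simp only [inner_E2, rot90, Matrix.cons_val_zero, Matrix.cons_val_one, Matrix.head_cons]
  linear_combination (-(t1 0 * t2 0) - t1 1 * t2 1) * h1

lemma eq_of_coords (u t1 t2 : E2) (hu : ‖u‖ = 1)
    (h1 : (inner ℝ u t1 : ℝ) = inner ℝ u t2)
    (h2 : (inner ℝ t1 (rot90 u) : ℝ) = inner ℝ t2 (rot90 u)) : t1 = t2 := by
  have hd1 := decomp_E2 u t1 hu
  have hd2 := decomp_E2 u t2 hu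
  rw [hd1, hd2]
  rw [real_inner_comm t1 u, real_inner_comm t2 u] at *
  rw [h1, h2]

end ABProof

open ABProof

/-- **Second-derivative conditions at a spatial minimum of `d/ψ`.**
If `d/ψ` attains a local minimum at `(p,q)` with `p ≠ q` and `l(p,q) ≤ L/2`, then
`⟨w, κ⃗_q - κ⃗_p⟩ ≥ -4π² d/L²`, and by the definition of `ψ` the right-hand side equals
`-(4π d/(ψ L)) sin(π l/L)`. -/
theorem second_derivative_conditions_at_min
    (X : ℝ → E2) (hcc : IsClosedCurve X) (hemb : IsEmbedded X)
    (p q : ℝ) (hpq : p < q) (hq : q < p + 1)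
    (hl : arcl X p q ≤ clen X / 2)
    (hmin : IsLocalMin (fun z : ℝ × ℝ => extd X z.1 z.2 / psi X z.1 z.2) (p, q)) :
    (inner ℝ (wvec X p q) (kvec X q - kvec X p) : ℝ)
        ≥ -(4 * π ^ 2 * extd X p q / (clen X) ^ 2) ∧
    -(4 * π ^ 2 * extd X p q / (clen X) ^ 2)
        = -(4 * π * extd X p q / (psi X p q * clen X)) * Real.sin (π * arcl X p q / clen X) := by
  obtain ⟨hXc, hper, hX'⟩ := hcc
  have hvp := hv_pos hXc hX'
  have hπ : (π:ℝ) ≠ 0 := ne_of_gt Real.pi_pos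
  -- positivity of basic quantities
  have hd0 : X q - X p ≠ 0 := by
    intro h
    have h2 : X p = X q := by
      have := sub_eq_zero.1 h
      exact this.symm
    obtain ⟨k, hk⟩ := hemb p q h2
    have hk1 : (0:ℝ) < (k:ℝ) := by rw [← hk]; linarith
    have hk2 : ((k:ℝ)) < 1 := by rw [← hk]; linarith
    have : (1:ℤ) ≤ k := by exact_mod_cast hk1
    have : (1:ℝ) ≤ (k:ℝ) := by exact_mod_cast this
    linarith
  have hd0pos : 0 < extd X p q := by rw [extd]; exact norm_pos_iff.2 hd0
  have hd0' : extd X p q ≠ 0 := ne_of_gt hd0pos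
  have hL : 0 < clen X := by
    rw [clen, arcl]
    exact intervalIntegral.intervalIntegral_pos_of_pos (hv_intable hXc hX' 0 1) hvp one_pos
  have hl0 : 0 < arcl X p q := by
    rw [arcl]
    exact intervalIntegral.intervalIntegral_pos_of_pos (hv_intable hXc hX' p q) hvp hpq
  have hlL : arcl X p q < clen X := by linarith
  have hsin : 0 < Real.sin (π * arcl X p q / clen X) := by
    apply Real.sin_pos_of_pos_of_lt_pi
    · positivity
    · rw [div_lt_iff₀ hL]
      have := Real.pi_pos
      nlinarith
  have hψ0 : 0 < psi X p q := by
    rw [psi]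
    exact mul_pos (div_pos hL Real.pi_pos) hsin
  -- equality part of the conclusion
  have heq : -(4 * π ^ 2 * extd X p q / (clen X) ^ 2)
      = -(4 * π * extd X p q / (psi X p q * clen X)) * Real.sin (π * arcl X p q / clen X) := by
    rw [psi, neg_mul, neg_inj, div_mul_eq_mul_div,
      div_eq_div_iff (by positivity) (by positivity)]
    field_simp
  refine ⟨?_, heq⟩
  -- unit vector w and inner product conversion
  have hw1 : ‖wvec X p q‖ = 1 := by
    rw [wvec, norm_smul, norm_inv, Real.norm_eq_abs, abs_of_pos hd0pos,
      show ‖X q - X p‖ = extd X p q from rfl]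
    exact inv_mul_cancel₀ hd0'
  have hwin : ∀ x : E2, (inner ℝ (X q - X p) x : ℝ)
      = extd X p q * (inner ℝ (wvec X p q) x : ℝ) := by
    intro x
    rw [wvec, real_inner_smul_left]
    field_simp
  -- first-order conditions
  have hvar01 := (variation hXc hX' hd0 hψ0 hmin 0 1).1
  simp only [one_smul, zero_smul, sub_zero, one_mul, zero_mul] at hvar01
  rw [hX'_eq hXc hX' q, real_inner_smul_right, hwin, div_eq_iff hd0'] at hvar01
  have htq : (inner ℝ (wvec X p q) (tvec X q) : ℝ)
      = extd X p q / psi X p q * Real.cos (π * arcl X p q / clen X) := by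
    have h2 : (lenElem X q * extd X p q) * (inner ℝ (wvec X p q) (tvec X q) : ℝ)
        = (lenElem X q * extd X p q)
          * (extd X p q / psi X p q * Real.cos (π * arcl X p q / clen X)) := by
      linear_combination hvar01
    exact mul_left_cancel₀ (mul_pos (hvp _) hd0pos).ne' h2
  have hvar10 := (variation hXc hX' hd0 hψ0 hmin 1 0).1
  simp only [one_smul, zero_smul, zero_sub, one_mul, zero_mul] at hvar10
  rw [hX'_eq hXc hX' p, inner_neg_right, real_inner_smul_right, hwin] at hvar10
  rw [neg_div, neg_eq_iff_eq_neg] at hvar10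
  have htp : (inner ℝ (wvec X p q) (tvec X p) : ℝ)
      = extd X p q / psi X p q * Real.cos (π * arcl X p q / clen X) := by
    have h2 : (lenElem X p * extd X p q) * (inner ℝ (wvec X p q) (tvec X p) : ℝ)
        = (lenElem X p * extd X p q)
          * (extd X p q / psi X p q * Real.cos (π * arcl X p q / clen X)) := by
      rw [div_eq_iff hd0'] at hvar10
      linear_combination hvar10
    exact mul_left_cancel₀ (mul_pos (hvp _) hd0pos).ne' h2
  -- tangent decomposition in the (w, rot90 w) frame
  have htnq := htau_norm hXc hX' q
  have htnp := htau_norm hXc hX' p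
  have hsp2 := sq_inner_rot (wvec X p q) (tvec X p) hw1 htnp
  have hsq2 := sq_inner_rot (wvec X p q) (tvec X q) hw1 htnq
  rw [htp] at hsp2
  rw [htq] at hsq2
  have hcases : (inner ℝ (tvec X p) (rot90 (wvec X p q)) : ℝ)
        = (inner ℝ (tvec X q) (rot90 (wvec X p q)) : ℝ)
      ∨ (inner ℝ (tvec X p) (rot90 (wvec X p q)) : ℝ)
        = -(inner ℝ (tvec X q) (rot90 (wvec X p q)) : ℝ) := by
    have hz : ((inner ℝ (tvec X p) (rot90 (wvec X p q)) : ℝ)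
          - (inner ℝ (tvec X q) (rot90 (wvec X p q)) : ℝ))
        * ((inner ℝ (tvec X p) (rot90 (wvec X p q)) : ℝ)
          + (inner ℝ (tvec X q) (rot90 (wvec X p q)) : ℝ)) = 0 := by
      linear_combination hsp2 - hsq2
    rcases mul_eq_zero.1 hz with h | h
    · left; linarith
    · right; linarith
  -- useful substitution for sin in terms of psi
  have hsival : Real.sin (π * arcl X p q / clen X) = π * psi X p q / clen X := by
    rw [psi]; field_simp
  rcases hcases with hcase | hcase
  · -- τ_p = τ_q : tangents agree
    have hteq : tvec X p = tvec X q := by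
      apply eq_of_coords (wvec X p q) _ _ hw1
      · rw [htp, htq]
      · exact hcase
    have hvB := (variation hXc hX' hd0 hψ0 hmin (lenElem X p)⁻¹ (lenElem X q)⁻¹).2
    have hE1B : (lenElem X q)⁻¹ • deriv X q - (lenElem X p)⁻¹ • deriv X p = 0 := by
      rw [hX'_eq hXc hX' q, hX'_eq hXc hX' p, smul_smul, smul_smul,
        inv_mul_cancel₀ (ne_of_gt (hvp q)), inv_mul_cancel₀ (ne_of_gt (hvp p)),
        one_smul, one_smul, hteq, sub_self]
    have hBVB : (lenElem X q)⁻¹ * lenElem X q - (lenElem X p)⁻¹ * lenElem X p = 0 := by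
      rw [inv_mul_cancel₀ (ne_of_gt (hvp q)), inv_mul_cancel₀ (ne_of_gt (hvp p)), sub_self]
    rw [hE1B, hBVB, hXdd hXc hX' q, hXdd hXc hX' p] at hvB
    rw [show (kvec X q + ((lenElem X q)⁻¹ ^ 2 * deriv (lenElem X) q) • tvec X q)
          - (kvec X p + ((lenElem X p)⁻¹ ^ 2 * deriv (lenElem X) p) • tvec X p)
        = (kvec X q - kvec X p) + (((lenElem X q)⁻¹ ^ 2 * deriv (lenElem X) q) • tvec X q
          - ((lenElem X p)⁻¹ ^ 2 * deriv (lenElem X) p) • tvec X p) by abel] at hvB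
    rw [inner_add_right, inner_sub_right, inner_sub_right, real_inner_smul_right,
      real_inner_smul_right, hwin (kvec X q), hwin (kvec X p), hwin (tvec X q),
      hwin (tvec X p), htq, htp, hsival] at hvB
    simp only [inner_zero_left, inner_zero_right] at hvB
    set Cq : ℝ := (lenElem X q)⁻¹ ^ 2 * deriv (lenElem X) q with hCq
    set Cp : ℝ := (lenElem X p)⁻¹ ^ 2 * deriv (lenElem X) p with hCp
    set Kq : ℝ := (inner ℝ (wvec X p q) (kvec X q) : ℝ) with hKq
    set Kp : ℝ := (inner ℝ (wvec X p q) (kvec X p) : ℝ) with hKp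
    set co : ℝ := Real.cos (π * arcl X p q / clen X) with hco
    set dd : ℝ := extd X p q with hdd
    set ps : ℝ := psi X p q with hps
    set LL : ℝ := clen X with hLL
    have hexp : (0 + (dd * Kq - dd * Kp + (Cq * (dd * (dd / ps * co)) - Cp * (dd * (dd / ps * co)))))
            / dd - 0 ^ 2 / dd ^ 3 - dd / ps * (co * (Cq - Cp) - π * ps / LL * (π / LL) * 0 ^ 2)
        = Kq - Kp := by
      field_simp
      ring
    rw [hexp] at hvB
    rw [ge_iff_le, inner_sub_right]
    have hpos : 0 < 4 * π ^ 2 * dd / LL ^ 2 := by positivity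
    linarith [hvB]
    
  · -- reflection case
    have hvA := (variation hXc hX' hd0 hψ0 hmin (-(lenElem X p)⁻¹) (lenElem X q)⁻¹).2
    have hE1A : (lenElem X q)⁻¹ • deriv X q - (-(lenElem X p)⁻¹) • deriv X p
        = tvec X q + tvec X p := by
      rw [hX'_eq hXc hX' q, hX'_eq hXc hX' p, smul_smul, smul_smul,
        inv_mul_cancel₀ (hvp q).ne', neg_mul, inv_mul_cancel₀ (hvp p).ne',
        one_smul, neg_smul, one_smul, sub_neg_eq_add]
    have hBVA : (lenElem X q)⁻¹ * lenElem X q - -(lenElem X p)⁻¹ * lenElem X p = 2 := by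
      rw [neg_mul, inv_mul_cancel₀ (hvp q).ne', inv_mul_cancel₀ (hvp p).ne']
      norm_num
    rw [hE1A, hBVA] at hvA
    simp only [neg_sq] at hvA
    rw [hXdd hXc hX' q, hXdd hXc hX' p] at hvA
    rw [show (kvec X q + ((lenElem X q)⁻¹ ^ 2 * deriv (lenElem X) q) • tvec X q)
          - (kvec X p + ((lenElem X p)⁻¹ ^ 2 * deriv (lenElem X) p) • tvec X p)
        = (kvec X q - kvec X p) + (((lenElem X q)⁻¹ ^ 2 * deriv (lenElem X) q) • tvec X q
          - ((lenElem X p)⁻¹ ^ 2 * deriv (lenElem X) p) • tvec X p) by abel] at hvA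
    have hq1 : (inner ℝ (tvec X q) (tvec X q) : ℝ) = 1 := by
      rw [real_inner_self_eq_norm_sq, htnq]; norm_num
    have hp1 : (inner ℝ (tvec X p) (tvec X p) : ℝ) = 1 := by
      rw [real_inner_self_eq_norm_sq, htnp]; norm_num
    have hqp := inner_mul_decomp (wvec X p q) (tvec X q) (tvec X p) hw1
    rw [htq, htp, hcase] at hqp
    have hI11 : (inner ℝ (tvec X q + tvec X p) (tvec X q + tvec X p) : ℝ)
        = 4 * (extd X p q / psi X p q * Real.cos (π * arcl X p q / clen X))^2 := by
      rw [real_inner_add_add_self, hq1, hp1, hqp]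
      linear_combination (-2:ℝ) * hsq2
    rw [hI11] at hvA
    rw [inner_add_right, inner_add_right, inner_sub_right, inner_sub_right,
      real_inner_smul_right, real_inner_smul_right, hwin (kvec X q), hwin (kvec X p),
      hwin (tvec X q), hwin (tvec X p), htq, htp, hsival] at hvA
    set Cq : ℝ := (lenElem X q)⁻¹ ^ 2 * deriv (lenElem X) q with hCq
    set Cp : ℝ := (lenElem X p)⁻¹ ^ 2 * deriv (lenElem X) p with hCp
    set Kq : ℝ := (inner ℝ (wvec X p q) (kvec X q) : ℝ) with hKq
    set Kp : ℝ := (inner ℝ (wvec X p q) (kvec X p) : ℝ) with hKp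
    set co : ℝ := Real.cos (π * arcl X p q / clen X) with hco
    set dd : ℝ := extd X p q with hdd
    set ps : ℝ := psi X p q with hps
    set LL : ℝ := clen X with hLL
    have hexp : (4 * (dd / ps * co) ^ 2 +
            (dd * Kq - dd * Kp + (Cq * (dd * (dd / ps * co)) - Cp * (dd * (dd / ps * co))))) / dd
          - (dd * (dd / ps * co) + dd * (dd / ps * co)) ^ 2 / dd ^ 3
          - dd / ps * (co * (Cq - Cp) - π * ps / LL * (π / LL) * 2 ^ 2)
        = Kq - Kp + 4 * π ^ 2 * dd / LL ^ 2 := by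
      field_simp
      ring
    rw [hexp] at hvA
    rw [ge_iff_le, inner_sub_right]
    linarith [hvA]
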